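/- arXiv:2109.14375 — 7 statements merged into one kernel-verified Lean document; each statement's English description precedes it below -/
import Mathlib

section
/- Given 0 < a < 1 and a natural number Q, the sum ∑_{q=0}^{Q-1} a^q / √(q+1) is at most 2 / (a √(1 - a)). -/
open Finset Real

lemma idA (a : ℝ) (Q : ℕ) :
    ∑ q ∈ range Q, a ^ q * (Real.sqrt (q + 1) - Real.sqrt q) =
      (1 - a) * ∑ q ∈ range Q, a ^ q * Real.sqrt (q + 1) + a ^ Q * Real.sqrt Q := by
  induction Q with
  | zero => simp
  | succ n ih =>
    rw [Finset.sum_range_succ, Finset.sum_range_succ]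
    push_cast
    push_cast at ih
    linear_combination ih

lemma idD (a : ℝ) (Q : ℕ) :
    (1 - a) * ∑ q ∈ range Q, a ^ q * ((1 - a) * (q + 1) + 1) +
      a ^ Q * ((1 - a) * (Q + 1) + 1) = 2 - a ^ (Q + 1) := by
  induction Q with
  | zero => norm_num; ring
  | succ n ih =>
    rw [Finset.sum_range_succ]
    push_cast
    push_cast at ih
    linear_combination ih

lemma sqrt_le_aux (b y : ℝ) (hb : 0 < b) (hy : 0 ≤ y) :
    Real.sqrt y ≤ (b * y + 1) / (2 * Real.sqrt b) := by
  have hsb : 0 < Real.sqrt b := Real.sqrt_pos.mpr hb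
  rw [le_div_iff₀ (by positivity)]
  nlinarith [Real.sq_sqrt hy, Real.sq_sqrt hb.le, Real.sqrt_nonneg y, Real.sqrt_nonneg b,
    sq_nonneg (Real.sqrt y * Real.sqrt b - 1)]

theorem sum_geom_div_sqrt (a : ℝ) (ha : 0 < a) (ha1 : a < 1) (Q : ℕ) (hQ : 0 < Q) :
    ∑ q ∈ Finset.range Q, a ^ q / Real.sqrt (q + 1) ≤ 2 / (a * Real.sqrt (1 - a)) := by
  have hb : 0 < 1 - a := by linarith
  set s := Real.sqrt (1 - a) with hs
  have hsp : 0 < s := Real.sqrt_pos.mpr hb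
  have step1 : ∑ q ∈ Finset.range Q, a ^ q / Real.sqrt (q + 1) ≤
      ∑ q ∈ Finset.range Q, 2 * (a ^ q * (Real.sqrt (q + 1) - Real.sqrt q)) := by
    apply Finset.sum_le_sum
    intro q _
    have hq1 : (0:ℝ) < (q:ℝ) + 1 := by positivity
    have ht : 0 < Real.sqrt ((q:ℝ) + 1) := Real.sqrt_pos.mpr hq1
    rw [div_le_iff₀ ht]
    have h1 : Real.sqrt ((q:ℝ) + 1) ^ 2 = (q:ℝ) + 1 := Real.sq_sqrt hq1.le
    have h2 : Real.sqrt (q:ℝ) ^ 2 = (q:ℝ) := Real.sq_sqrt (by positivity)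
    have hap : (0:ℝ) < a ^ q := pow_pos ha q
    nlinarith [sq_nonneg (Real.sqrt ((q:ℝ) + 1) - Real.sqrt (q:ℝ)),
      Real.sqrt_nonneg (q:ℝ), mul_nonneg hap.le
        (sq_nonneg (Real.sqrt ((q:ℝ) + 1) - Real.sqrt (q:ℝ)))]
  have step2 : ∑ q ∈ Finset.range Q, 2 * (a ^ q * (Real.sqrt (q + 1) - Real.sqrt q)) =
      2 * ((1 - a) * ∑ q ∈ Finset.range Q, a ^ q * Real.sqrt (q + 1)
        + a ^ Q * Real.sqrt Q) := by
    rw [← Finset.mul_sum, idA]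
  have step3 : (1 - a) * ∑ q ∈ Finset.range Q, a ^ q * Real.sqrt (q + 1)
        + a ^ Q * Real.sqrt Q ≤
      (1 - a) * ∑ q ∈ Finset.range Q, a ^ q * (((1 - a) * (q + 1) + 1) / (2 * s))
        + a ^ Q * (((1 - a) * (Q + 1) + 1) / (2 * s)) := by
    have hQ1 : Real.sqrt (Q:ℝ) ≤ ((1 - a) * ((Q:ℝ) + 1) + 1) / (2 * s) := by
      calc Real.sqrt (Q:ℝ) ≤ Real.sqrt ((Q:ℝ) + 1) := by
            apply Real.sqrt_le_sqrt; linarith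
        _ ≤ ((1 - a) * ((Q:ℝ) + 1) + 1) / (2 * s) := sqrt_le_aux _ _ hb (by positivity)
    gcongr with q hq <;>
      first
        | exact sqrt_le_aux _ _ hb (by positivity)
        | exact hQ1
        | positivity
  have step4 : (1 - a) * ∑ q ∈ Finset.range Q, a ^ q * (((1 - a) * (q + 1) + 1) / (2 * s))
        + a ^ Q * (((1 - a) * (Q + 1) + 1) / (2 * s)) = (2 - a ^ (Q + 1)) / (2 * s) := by
    simp only [← mul_div_assoc]
    rw [← Finset.sum_div, ← mul_div_assoc, ← add_div, idD]
  have hpow : 0 < a ^ (Q + 1) := pow_pos ha _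
  have step5 : (2 - a ^ (Q + 1)) / (2 * s) ≤ 1 / s := by
    rw [div_le_div_iff₀ (by positivity) hsp]
    nlinarith
  have step6 : 2 * (1 / s) ≤ 2 / (a * s) := by
    rw [mul_one_div, div_le_div_iff₀ hsp (by positivity)]
    nlinarith
  calc ∑ q ∈ Finset.range Q, a ^ q / Real.sqrt (q + 1)
      ≤ ∑ q ∈ Finset.range Q, 2 * (a ^ q * (Real.sqrt (q + 1) - Real.sqrt q)) := step1
    _ = 2 * ((1 - a) * ∑ q ∈ Finset.range Q, a ^ q * Real.sqrt (q + 1)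
        + a ^ Q * Real.sqrt Q) := step2
    _ ≤ 2 * ((2 - a ^ (Q + 1)) / (2 * s)) := by
        rw [← step4]; linarith [step3]
    _ ≤ 2 * (1 / s) := by linarith [step5]
    _ ≤ 2 / (a * s) := step6
end

section
/- Given 0 < a < 1 and a natural number Q, the sum ∑_{q=0}^{Q-1} a^q √q (q+1) is at most 4a / (1 - a)^{5/2}. -/
theorem sum_geom_sqrt_mul (a : ℝ) (ha : 0 < a) (ha1 : a < 1) (Q : ℕ) (hQ : 0 < Q) :
    ∑ q ∈ Finset.range Q, a ^ q * Real.sqrt q * (q + 1) ≤ 4 * a / (1 - a) ^ ((5 : ℝ) / 2) := by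
  have h1a : (0:ℝ) < 1 - a := by linarith
  set b : ℝ := Real.sqrt (1 - a) with hb
  have hb0 : 0 < b := Real.sqrt_pos.2 h1a
  have hb2 : b ^ 2 = 1 - a := Real.sq_sqrt h1a.le
  have hnorm : ‖a‖ < 1 := by rw [Real.norm_eq_abs, abs_of_pos ha]; exact ha1
  have hS1 : HasSum (fun n : ℕ ↦ (n : ℝ) * a ^ n) (a / (1 - a) ^ 2) :=
    hasSum_coe_mul_geometric_of_norm_lt_one hnorm
  have hS2' : HasSum (fun n : ℕ ↦ ((n + 2).choose 2 : ℝ) * a ^ n) (1 / (1 - a) ^ 3) :=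
    hasSum_choose_mul_geometric_of_norm_lt_one 2 hnorm
  have hS2 : HasSum (fun n : ℕ ↦ ((n : ℝ) + 1) * ((n : ℝ) + 2) * a ^ n) (2 / (1 - a) ^ 3) := by
    have h := hS2'.mul_left 2
    convert h using 1
    · rfl
    · funext n
      rw [Nat.cast_choose_two]
      push_cast
      ring
    · ring
  set f : ℕ → ℝ := fun m ↦ (m : ℝ) * ((m : ℝ) + 1) * a ^ m with hfdef
  have hS3 : HasSum f (2 * a / (1 - a) ^ 3) := by
    have h2 : HasSum (fun n ↦ f (n + 1)) (2 * a / (1 - a) ^ 3 - ∑ i ∈ Finset.range 1, f i) := by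
      have h := hS2.mul_left a
      convert h using 1
      · rfl
      · funext n
        simp only [hfdef]
        push_cast
        ring
      · simp only [hfdef, Finset.range_one, Finset.sum_singleton, Nat.cast_zero]
        ring
    exact (hasSum_nat_add_iff' 1).mp h2
  -- termwise bound
  have hterm : ∀ q : ℕ, a ^ q * Real.sqrt q * (q + 1) ≤
      (b / 2) * (f q) + (1 / b) * ((q : ℝ) * a ^ q) := by
    intro q
    have hpow : (0:ℝ) ≤ a ^ q := by positivity
    rcases Nat.eq_zero_or_pos q with h0 | h1
    · simp [h0, hfdef]
    · have hq1 : (1:ℝ) ≤ (q:ℝ) := by exact_mod_cast h1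
      have hsq : Real.sqrt q ^ 2 = (q : ℝ) := Real.sq_sqrt (by positivity)
      have key0 : 2 * b * Real.sqrt q ≤ b ^ 2 * (q:ℝ) + 1 := by
        have h := sq_nonneg (b * Real.sqrt q - 1)
        have heq : (b * Real.sqrt q - 1) ^ 2 = b ^ 2 * (q:ℝ) - 2 * b * Real.sqrt q + 1 := by
          rw [sub_sq, mul_pow, hsq]; ring
        linarith [heq ▸ h]
      have key : Real.sqrt q ≤ (b * q + 1 / b) / 2 := by
        rw [le_div_iff₀ (by norm_num : (0:ℝ) < 2), ← sub_nonneg]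
        have heq : b * (q:ℝ) + 1 / b - Real.sqrt q * 2
            = (b ^ 2 * (q:ℝ) + 1 - 2 * b * Real.sqrt q) / b := by
          field_simp
        rw [heq]
        exact div_nonneg (by linarith) hb0.le
      have h2 : Real.sqrt q * ((q:ℝ) + 1) ≤ (b / 2) * ((q:ℝ) * ((q:ℝ) + 1)) + (1 / b) * q := by
        have hmul := mul_le_mul_of_nonneg_right key (by linarith : (0:ℝ) ≤ (q:ℝ) + 1)
        have hqb : ((q:ℝ) + 1) / (2 * b) ≤ (q:ℝ) / b := by
          rw [div_le_div_iff₀ (by positivity) hb0]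
          nlinarith
        calc Real.sqrt q * ((q:ℝ) + 1) ≤ (b * q + 1 / b) / 2 * ((q:ℝ) + 1) := hmul
          _ = (b / 2) * ((q:ℝ) * ((q:ℝ) + 1)) + ((q:ℝ) + 1) / (2 * b) := by
              field_simp
          _ ≤ (b / 2) * ((q:ℝ) * ((q:ℝ) + 1)) + (q:ℝ) / b := by linarith
          _ = (b / 2) * ((q:ℝ) * ((q:ℝ) + 1)) + (1 / b) * q := by ring
      calc a ^ q * Real.sqrt q * (q + 1) = (Real.sqrt q * ((q:ℝ) + 1)) * a ^ q := by ring
        _ ≤ ((b / 2) * ((q:ℝ) * ((q:ℝ) + 1)) + (1 / b) * q) * a ^ q :=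
            mul_le_mul_of_nonneg_right h2 hpow
        _ = (b / 2) * (f q) + (1 / b) * ((q : ℝ) * a ^ q) := by simp only [hfdef]; ring
  have hsum3 : ∑ q ∈ Finset.range Q, f q ≤ 2 * a / (1 - a) ^ 3 := by
    rw [← hS3.tsum_eq]
    exact Summable.sum_le_tsum _ (fun i _ ↦ by simp only [hfdef]; positivity) hS3.summable
  have hsum1 : ∑ q ∈ Finset.range Q, (q : ℝ) * a ^ q ≤ a / (1 - a) ^ 2 := by
    rw [← hS1.tsum_eq]
    exact Summable.sum_le_tsum _ (fun i _ ↦ by positivity) hS1.summable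
  have main : ∑ q ∈ Finset.range Q, a ^ q * Real.sqrt q * (q + 1) ≤
      (b / 2) * (2 * a / (1 - a) ^ 3) + (1 / b) * (a / (1 - a) ^ 2) := by
    calc ∑ q ∈ Finset.range Q, a ^ q * Real.sqrt q * (q + 1)
        ≤ ∑ q ∈ Finset.range Q, ((b / 2) * (f q) + (1 / b) * ((q : ℝ) * a ^ q)) :=
          Finset.sum_le_sum (fun q _ ↦ hterm q)
      _ = (b / 2) * (∑ q ∈ Finset.range Q, f q)
            + (1 / b) * (∑ q ∈ Finset.range Q, (q : ℝ) * a ^ q) := by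
          rw [Finset.sum_add_distrib, Finset.mul_sum, Finset.mul_sum]
      _ ≤ (b / 2) * (2 * a / (1 - a) ^ 3) + (1 / b) * (a / (1 - a) ^ 2) := by
          gcongr
  have hrpow : (1 - a) ^ ((5 : ℝ) / 2) = b ^ 5 := by
    rw [hb, Real.sqrt_eq_rpow, ← Real.rpow_natCast ((1 - a) ^ ((1:ℝ)/2)) 5,
      ← Real.rpow_mul h1a.le]
    norm_num
  have hb5 : (0:ℝ) < b ^ 5 := by positivity
  calc ∑ q ∈ Finset.range Q, a ^ q * Real.sqrt q * (q + 1)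
      ≤ (b / 2) * (2 * a / (1 - a) ^ 3) + (1 / b) * (a / (1 - a) ^ 2) := main
    _ = 2 * a / b ^ 5 := by rw [← hb2]; field_simp; ring
    _ ≤ 4 * a / b ^ 5 := by gcongr; linarith
    _ = 4 * a / (1 - a) ^ ((5 : ℝ) / 2) := by rw [hrpow]
end

section
/- Let 0 < β₂ ≤ 1, ε > 0, and {a_n} a nonnegative real sequence. Define b_n = ∑_{j=1}^n β₂^{n-j} a_j with b_0 = 0. Then ∑_{j=1}^N a_j / (ε + b_j) ≤ ln(1 + b_N/ε) − N ln(β₂). -/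
theorem sum_ratio_lemma (β₂ ε : ℝ) (hβ₂ : 0 < β₂) (hβ₂1 : β₂ ≤ 1) (hε : 0 < ε)
    (a : ℕ → ℝ) (ha : ∀ n, 0 ≤ a n)
    (b : ℕ → ℝ) (hb : ∀ n, b n = ∑ j ∈ Finset.Icc 1 n, β₂ ^ (n - j) * a j)
    (N : ℕ) (hN : 0 < N) :
    ∑ j ∈ Finset.Icc 1 N, a j / (ε + b j) ≤
      Real.log (1 + b N / ε) - N * Real.log β₂ := by
  have hbnn : ∀ n, 0 ≤ b n := by
    intro n; rw [hb]
    exact Finset.sum_nonneg fun j _ => mul_nonneg (pow_nonneg hβ₂.le _) (ha j)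
  have hpos : ∀ n, 0 < ε + b n := fun n => by linarith [hbnn n]
  have hrec : ∀ n, b (n+1) = β₂ * b n + a (n+1) := by
    intro n
    rw [hb, hb, Finset.sum_Icc_succ_top (Nat.le_add_left 1 n)]
    rw [Nat.sub_self, pow_zero, one_mul, Finset.mul_sum]
    congr 1
    apply Finset.sum_congr rfl
    intro j hj
    rw [Finset.mem_Icc] at hj
    rw [← mul_assoc, ← pow_succ']
    congr 2
    omega
  have key : ∀ n, ∑ j ∈ Finset.Icc 1 n, a j / (ε + b j) ≤
      Real.log (ε + b n) - Real.log ε - n * Real.log β₂ := by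
    intro n
    induction n with
    | zero => simp [hb 0]
    | succ n ih =>
      rw [Finset.sum_Icc_succ_top (Nat.le_add_left 1 n)]
      have hx : 0 ≤ a (n+1) := ha (n+1)
      have hymx : β₂ * (ε + b n) ≤ ε + b (n+1) - a (n+1) := by
        rw [hrec]; nlinarith [hbnn n]
      have hymxpos : 0 < ε + b (n+1) - a (n+1) :=
        lt_of_lt_of_le (mul_pos hβ₂ (hpos n)) hymx
      have h1 : a (n+1) / (ε + b (n+1)) ≤
          Real.log (ε + b (n+1)) - Real.log (ε + b (n+1) - a (n+1)) := by
        have hy := hpos (n+1)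
        have hlog := Real.log_le_sub_one_of_pos
          (div_pos hymxpos hy)
        rw [Real.log_div hymxpos.ne' hy.ne'] at hlog
        have hq : (ε + b (n+1) - a (n+1)) / (ε + b (n+1)) - 1
            = - (a (n+1) / (ε + b (n+1))) := by
          field_simp
          ring
        rw [hq] at hlog
        linarith
      have h2 : Real.log β₂ + Real.log (ε + b n) ≤ Real.log (ε + b (n+1) - a (n+1)) := by
        rw [← Real.log_mul hβ₂.ne' (hpos n).ne']
        exact Real.log_le_log (mul_pos hβ₂ (hpos n)) hymx
      push_cast
      linarith
  have hfin := key N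
  have hlogeq : Real.log (1 + b N / ε) = Real.log (ε + b N) - Real.log ε := by
    rw [← Real.log_div (hpos N).ne' hε.ne']
    congr 1
    field_simp
  linarith
end

section
/- Let 0 < β₂ ≤ 1, 0 < β₁ < β₂, ε > 0, and {a_n} a real sequence. Define b_n = ∑_{j=1}^n β₂^{n-j} a_j² and c_n = ∑_{j=1}^n β₁^{n-j} a_j. Then ∑_{j=1}^n c_j² / (ε + b_j) ≤ (1/((1-β₁)(1-β₁/β₂))) (ln(1 + b_n/ε) − n ln(β₂)). -/
open Finset

private lemma geom_le_aux {q : ℝ} (h0 : 0 ≤ q) (h1 : q < 1) (n : ℕ) :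
    ∑ i ∈ Finset.range n, q ^ i ≤ 1 / (1 - q) := by
  have hne : q ≠ 1 := ne_of_lt h1
  rw [geom_sum_eq hne]
  have h1q : (0:ℝ) < 1 - q := by linarith
  have e : (q ^ n - 1) / (q - 1) = (1 - q ^ n) / (1 - q) := by
    rw [div_eq_div_iff (by linarith) (by linarith)]; ring
  rw [e]
  have : (0:ℝ) ≤ q ^ n := pow_nonneg h0 n
  apply div_le_div_of_nonneg_right (by linarith) h1q.le

theorem sum_ratio_momentum (β₁ β₂ ε : ℝ) (hβ₁ : 0 < β₁) (hβ₁₂ : β₁ < β₂) (hβ₂ : β₂ ≤ 1)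
    (hε : 0 < ε) (a : ℕ → ℝ)
    (b : ℕ → ℝ) (hb : ∀ m, b m = ∑ j ∈ Finset.Icc 1 m, β₂ ^ (m - j) * (a j) ^ 2)
    (c : ℕ → ℝ) (hc : ∀ m, c m = ∑ j ∈ Finset.Icc 1 m, β₁ ^ (m - j) * a j)
    (n : ℕ) :
    ∑ j ∈ Finset.Icc 1 n, (c j) ^ 2 / (ε + b j) ≤
      1 / ((1 - β₁) * (1 - β₁ / β₂)) * (Real.log (1 + b n / ε) - n * Real.log β₂) := by
  have hβ₂0 : 0 < β₂ := hβ₁.trans hβ₁₂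
  have hβ₁1 : β₁ < 1 := lt_of_lt_of_le hβ₁₂ hβ₂
  set q : ℝ := β₁ / β₂ with hqdef
  have hq0 : 0 < q := div_pos hβ₁ hβ₂0
  have hq1 : q < 1 := (div_lt_one hβ₂0).2 hβ₁₂
  have hbnn : ∀ m, 0 ≤ b m := by
    intro m; rw [hb]; positivity
  have hεb : ∀ m, 0 < ε + b m := fun m => by have := hbnn m; linarith
  -- Cauchy-Schwarz step
  have hA : ∀ j, (c j) ^ 2 ≤ (1 / (1 - β₁)) * ∑ k ∈ Icc 1 j, β₁ ^ (j - k) * (a k) ^ 2 := by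
    intro j
    rw [hc]
    have hs : (0:ℝ) ≤ β₁ := hβ₁.le
    have key : (∑ k ∈ Icc 1 j, β₁ ^ (j - k) * a k) ^ 2 ≤
        (∑ k ∈ Icc 1 j, β₁ ^ (j - k)) * ∑ k ∈ Icc 1 j, β₁ ^ (j - k) * (a k) ^ 2 := by
      have := Finset.sum_mul_sq_le_sq_mul_sq (Icc 1 j)
        (fun k => Real.sqrt β₁ ^ (j - k)) (fun k => Real.sqrt β₁ ^ (j - k) * a k)
      have e1 : ∀ k, Real.sqrt β₁ ^ (j - k) * (Real.sqrt β₁ ^ (j - k) * a k)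
          = β₁ ^ (j - k) * a k := by
        intro k
        rw [← mul_assoc, ← pow_add, ← two_mul, pow_mul, Real.sq_sqrt hs]
      have e2 : ∀ k, (Real.sqrt β₁ ^ (j - k)) ^ 2 = β₁ ^ (j - k) := by
        intro k; rw [← pow_mul, mul_comm, pow_mul, Real.sq_sqrt hs]
      have e3 : ∀ k, (Real.sqrt β₁ ^ (j - k) * a k) ^ 2 = β₁ ^ (j - k) * (a k) ^ 2 := by
        intro k; rw [mul_pow, e2]
      simp_rw [e1, e2, e3] at this
      exact this
    have hgeom : (∑ k ∈ Icc 1 j, β₁ ^ (j - k)) ≤ 1 / (1 - β₁) := by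
      have h : (∑ k ∈ Icc 1 j, β₁ ^ (j - k)) = ∑ i ∈ range j, β₁ ^ (j - 1 - i) := by
        rw [← Finset.Ico_add_one_right_eq_Icc, Finset.sum_Ico_eq_sum_range]
        apply Finset.sum_congr (by congr 1 <;> omega)
        intro i _
        have h' : j - (1 + i) = j - 1 - i := by omega
        rw [h']
      rw [h]
      calc ∑ i ∈ range j, β₁ ^ (j - 1 - i)
          = ∑ i ∈ range j, β₁ ^ i := Finset.sum_range_reflect (fun i => β₁ ^ i) j
        _ ≤ 1 / (1 - β₁) := geom_le_aux hs hβ₁1 j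
    calc (∑ k ∈ Icc 1 j, β₁ ^ (j - k) * a k) ^ 2
        ≤ (∑ k ∈ Icc 1 j, β₁ ^ (j - k)) * ∑ k ∈ Icc 1 j, β₁ ^ (j - k) * (a k) ^ 2 := key
      _ ≤ (1 / (1 - β₁)) * ∑ k ∈ Icc 1 j, β₁ ^ (j - k) * (a k) ^ 2 := by
          apply mul_le_mul_of_nonneg_right hgeom
          apply Finset.sum_nonneg; intro k _; positivity
  -- monotonicity step
  have hB : ∀ k j : ℕ, k ≤ j → β₂ ^ (j - k) * (ε + b k) ≤ ε + b j := by
    intro k j hkj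
    have h1 : β₂ ^ (j - k) * ε ≤ ε := by
      have := pow_le_one₀ hβ₂0.le hβ₂ (n := j - k)
      nlinarith
    have h2 : β₂ ^ (j - k) * b k ≤ b j := by
      rw [hb, hb, Finset.mul_sum]
      apply le_trans _ (Finset.sum_le_sum_of_subset_of_nonneg
        (Finset.Icc_subset_Icc_right hkj) (by intro i _ _; positivity))
      apply le_of_eq
      apply Finset.sum_congr rfl
      intro i hi
      simp only [Finset.mem_Icc] at hi
      rw [← mul_assoc, ← pow_add]
      congr 2
      omega
    nlinarith [hεb k]
  -- recurrence
  have hrec : ∀ m : ℕ, b (m + 1) = β₂ * b m + (a (m + 1)) ^ 2 := by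
    intro m
    rw [hb, hb, Finset.sum_Icc_succ_top (by omega), Finset.mul_sum]
    simp only [Nat.sub_self, pow_zero, one_mul]
    congr 1
    apply Finset.sum_congr rfl
    intro i hi
    simp only [Finset.mem_Icc] at hi
    rw [← mul_assoc, ← pow_succ']
    congr 2
    omega
  -- log step
  have hlog : ∀ m : ℕ, (a (m + 1)) ^ 2 / (ε + b (m + 1)) ≤
      Real.log (ε + b (m + 1)) - Real.log (ε + b m) - Real.log β₂ := by
    intro m
    set y : ℝ := ε + b (m + 1) with hy
    set x : ℝ := (a (m + 1)) ^ 2 with hx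
    have hy0 : 0 < y := hεb (m + 1)
    have hx0 : 0 ≤ x := sq_nonneg _
    have hyx : y - x = ε + β₂ * b m := by rw [hy, hx, hrec]; ring
    have hyx0 : 0 < y - x := by
      rw [hyx]; have := hbnn m; nlinarith
    have step1 : x / y ≤ Real.log y - Real.log (y - x) := by
      have h := Real.log_le_sub_one_of_pos (show 0 < (y - x) / y from div_pos hyx0 hy0)
      rw [Real.log_div (ne_of_gt hyx0) (ne_of_gt hy0)] at h
      have : (y - x) / y - 1 = -(x / y) := by field_simp; ring
      linarith [this ▸ h]
    have step2 : Real.log β₂ + Real.log (ε + b m) ≤ Real.log (y - x) := by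
      rw [← Real.log_mul (ne_of_gt hβ₂0) (ne_of_gt (hεb m)), hyx]
      apply Real.log_le_log (mul_pos hβ₂0 (hεb m))
      nlinarith [hbnn m]
    linarith
  -- telescoped logarithmic bound
  have htel : ∑ k ∈ Icc 1 n, (a k) ^ 2 / (ε + b k) ≤
      Real.log (1 + b n / ε) - n * Real.log β₂ := by
    have hIcc : ∑ k ∈ Icc 1 n, (a k) ^ 2 / (ε + b k)
        = ∑ i ∈ range n, (a (i + 1)) ^ 2 / (ε + b (i + 1)) := by
      rw [← Finset.Ico_add_one_right_eq_Icc, Finset.sum_Ico_eq_sum_range]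
      apply Finset.sum_congr (by congr 1 <;> omega)
      intro i _; rw [add_comm 1 i]
    rw [hIcc]
    have hb0 : b 0 = 0 := by rw [hb]; simp
    calc ∑ i ∈ range n, (a (i + 1)) ^ 2 / (ε + b (i + 1))
        ≤ ∑ i ∈ range n, (Real.log (ε + b (i + 1)) - Real.log (ε + b i) - Real.log β₂) := by
          apply Finset.sum_le_sum; intro i _; exact hlog i
      _ = (Real.log (ε + b n) - Real.log (ε + b 0)) - n * Real.log β₂ := by
          rw [Finset.sum_sub_distrib, Finset.sum_range_sub (fun i => Real.log (ε + b i))]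
          simp [mul_comm]
      _ = Real.log (1 + b n / ε) - n * Real.log β₂ := by
          rw [hb0, add_zero]
          congr 1
          rw [← Real.log_div (ne_of_gt (hεb n)) (ne_of_gt hε)]
          congr 1
          field_simp
  -- main chain
  have hchain : ∑ j ∈ Icc 1 n, (c j) ^ 2 / (ε + b j) ≤
      (1 / (1 - β₁)) * (1 / (1 - q)) * ∑ k ∈ Icc 1 n, (a k) ^ 2 / (ε + b k) := by
    calc ∑ j ∈ Icc 1 n, (c j) ^ 2 / (ε + b j)
        ≤ ∑ j ∈ Icc 1 n, (1 / (1 - β₁)) * ∑ k ∈ Icc 1 j, q ^ (j - k) * ((a k) ^ 2 / (ε + b k)) := by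
          apply Finset.sum_le_sum
          intro j hj
          have h1β : (0:ℝ) ≤ 1 / (1 - β₁) := by
            apply div_nonneg zero_le_one; linarith
          have h1 : (c j) ^ 2 / (ε + b j) ≤
              ((1 / (1 - β₁)) * ∑ k ∈ Icc 1 j, β₁ ^ (j - k) * (a k) ^ 2) / (ε + b j) :=
            div_le_div_of_nonneg_right (hA j) (hεb j).le
          apply h1.trans
          rw [mul_div_assoc, Finset.sum_div]
          apply mul_le_mul_of_nonneg_left _ h1β
          apply Finset.sum_le_sum
          intro k hk
          simp only [Finset.mem_Icc] at hk hj
          have hkj : k ≤ j := hk.2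
          have hden : 0 < β₂ ^ (j - k) * (ε + b k) := mul_pos (pow_pos hβ₂0 _) (hεb k)
          have : β₁ ^ (j - k) * (a k) ^ 2 / (ε + b j)
              ≤ β₁ ^ (j - k) * (a k) ^ 2 / (β₂ ^ (j - k) * (ε + b k)) :=
            div_le_div_of_nonneg_left (by positivity) hden (hB k j hkj)
          apply this.trans
          apply le_of_eq
          have hne1 : (β₂:ℝ) ^ (j - k) ≠ 0 := ne_of_gt (pow_pos hβ₂0 _)
          have hne2 : ε + b k ≠ 0 := ne_of_gt (hεb k)
          rw [hqdef, div_pow]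
          field_simp
          try ring
      _ = (1 / (1 - β₁)) * ∑ k ∈ Icc 1 n, ((a k) ^ 2 / (ε + b k)) * ∑ j ∈ Icc k n, q ^ (j - k) := by
          rw [← Finset.mul_sum]
          congr 1
          rw [Finset.sum_comm' (t' := Icc 1 n) (s' := fun k => Icc k n)
            (by intro x y; simp only [Finset.mem_Icc]; omega)]
          apply Finset.sum_congr rfl
          intro k _
          rw [Finset.mul_sum]
          apply Finset.sum_congr rfl
          intro j _
          ring
      _ ≤ (1 / (1 - β₁)) * ∑ k ∈ Icc 1 n, ((a k) ^ 2 / (ε + b k)) * (1 / (1 - q)) := by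
          apply mul_le_mul_of_nonneg_left _ (by
            apply div_nonneg zero_le_one; linarith)
          apply Finset.sum_le_sum
          intro k _
          apply mul_le_mul_of_nonneg_left _ (div_nonneg (sq_nonneg _) (hεb k).le)
          have : ∑ j ∈ Icc k n, q ^ (j - k) = ∑ i ∈ range (n + 1 - k), q ^ i := by
            rw [← Finset.Ico_add_one_right_eq_Icc, Finset.sum_Ico_eq_sum_range]
            apply Finset.sum_congr rfl
            intro i _; congr 1; omega
          rw [this]
          exact geom_le_aux hq0.le hq1 _
      _ = (1 / (1 - β₁)) * (1 / (1 - q)) * ∑ k ∈ Icc 1 n, (a k) ^ 2 / (ε + b k) := by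
          rw [← Finset.sum_mul, mul_assoc, mul_comm (∑ k ∈ Icc 1 n, (a k) ^ 2 / (ε + b k))]
  have hfinal : (1 / (1 - β₁)) * (1 / (1 - q)) = 1 / ((1 - β₁) * (1 - q)) := by
    rw [div_mul_div_comm, one_mul]
  have hlogβ : 0 ≤ Real.log (1 + b n / ε) - n * Real.log β₂ := by
    have h1 : 0 ≤ Real.log (1 + b n / ε) := Real.log_nonneg (by
      have := hbnn n; have : 0 ≤ b n / ε := by positivity
      linarith)
    have h2 : Real.log β₂ ≤ 0 := Real.log_nonpos hβ₂0.le hβ₂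
    have h3 : (0:ℝ) ≤ n := Nat.cast_nonneg n
    nlinarith
  calc ∑ j ∈ Icc 1 n, (c j) ^ 2 / (ε + b j)
      ≤ (1 / (1 - β₁)) * (1 / (1 - q)) * ∑ k ∈ Icc 1 n, (a k) ^ 2 / (ε + b k) := hchain
    _ ≤ (1 / (1 - β₁)) * (1 / (1 - q)) * (Real.log (1 + b n / ε) - n * Real.log β₂) := by
        apply mul_le_mul_of_nonneg_left htel (mul_nonneg
          (div_nonneg zero_le_one (by linarith)) (div_nonneg zero_le_one (by linarith)))
    _ = 1 / ((1 - β₁) * (1 - q)) * (Real.log (1 + b n / ε) - n * Real.log β₂) := by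
        rw [hfinal]
end

section
/- Given 0 < a < 1 and Q ∈ ℕ, the sum ∑_{q=0}^{Q-1} a^q √(q+1) is at most (1/(1-a))(1 + √π/(2√(−ln a))). -/
open Real MeasureTheory Set Finset

theorem sum_geom_sqrt' (a : ℝ) (ha : 0 < a) (ha1 : a < 1) (Q : ℕ) (hQ : 0 < Q) :
    ∑ q ∈ Finset.range Q, a ^ q * Real.sqrt (q + 1) ≤
      1 / (1 - a) * (1 + Real.sqrt Real.pi / (2 * Real.sqrt (-Real.log a))) := by
  set c : ℝ := -Real.log a with hc_def
  have hc : 0 < c := by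
    have := Real.log_neg ha ha1
    simp only [hc_def]; linarith
  have hsc : 0 < Real.sqrt c := Real.sqrt_pos.mpr hc
  have h1a : 0 < 1 - a := by linarith
  have haq : ∀ q : ℕ, a ^ q = Real.exp (-(c * q)) := by
    intro q
    rw [← Real.exp_log ha, ← Real.exp_nat_mul]
    congr 1
    simp [hc_def]; ring
  set h : ℝ → ℝ := fun s => s ^ (-(1/2) : ℝ) * Real.exp (-(c * s)) with hh_def
  have hInt : IntegrableOn h (Set.Ioi 0) := by
    have := integrableOn_rpow_mul_exp_neg_mul_rpow (p := 1) (s := -(1/2)) (b := c)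
      (by norm_num) (by norm_num) hc
    simpa [hh_def, Real.rpow_one, neg_mul] using this
  have hval : ∫ s in Set.Ioi (0:ℝ), h s = Real.sqrt Real.pi / Real.sqrt c := by
    have := Real.integral_rpow_mul_exp_neg_mul_Ioi (a := (1/2 : ℝ)) (r := c)
      (by norm_num) hc
    rw [show (1/2 - 1 : ℝ) = -(1/2) by norm_num, Real.Gamma_one_half_eq] at this
    rw [hh_def]
    simp only at this ⊢
    rw [this, ← Real.sqrt_eq_rpow, Real.sqrt_div' 1 hc.le, Real.sqrt_one]
    ring
  have hnn : 0 ≤ᵐ[volume.restrict (Set.Ioi (0:ℝ))] h := by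
    filter_upwards [ae_restrict_mem measurableSet_Ioi] with s hs
    have : (0:ℝ) < s := hs
    positivity
  -- key per-term bound
  have hterm : ∀ q : ℕ, a ^ (q + 1) * (Real.sqrt (q + 2) - Real.sqrt (q + 1)) ≤
      ∫ s in Set.Ioc (q : ℝ) (q + 1), h s / 2 := by
    intro q
    have hq1 : (0:ℝ) < (q:ℝ) + 1 := by positivity
    have hs1 : 0 < Real.sqrt ((q:ℝ) + 1) := Real.sqrt_pos.mpr hq1
    have hsub : Set.Ioc (q:ℝ) (q+1) ⊆ Set.Ioi 0 := by
      intro s hs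
      have : (0:ℝ) ≤ q := Nat.cast_nonneg q
      exact lt_of_le_of_lt this hs.1
    have hIntq : IntegrableOn (fun s => h s / 2) (Set.Ioc (q:ℝ) (q+1)) :=
      (hInt.mono_set hsub).div_const 2
    -- pointwise: constant ≤ h s / 2 on Ioc
    have hptw : ∀ s ∈ Set.Ioc (q:ℝ) (q+1),
        a ^ (q + 1) * (Real.sqrt (q + 2) - Real.sqrt (q + 1)) ≤ h s / 2 := by
      intro s hs
      have hs0 : (0:ℝ) < s := hsub hs
      have h1 : Real.sqrt ((q:ℝ) + 2) - Real.sqrt ((q:ℝ) + 1)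
          ≤ 1 / (2 * Real.sqrt ((q:ℝ) + 1)) := by
        have hsq : Real.sqrt ((q:ℝ)+1) ^ 2 = (q:ℝ)+1 := Real.sq_sqrt hq1.le
        have h2q : Real.sqrt ((q:ℝ)+2) ^ 2 = (q:ℝ)+2 := Real.sq_sqrt (by positivity)
        have hab : Real.sqrt ((q:ℝ)+1) ≤ Real.sqrt ((q:ℝ)+2) := Real.sqrt_le_sqrt (by linarith)
        have hd : (Real.sqrt ((q:ℝ)+2) - Real.sqrt ((q:ℝ)+1))
            * (Real.sqrt ((q:ℝ)+2) + Real.sqrt ((q:ℝ)+1)) = 1 := by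
          linear_combination h2q - hsq
        rw [le_div_iff₀ (by positivity)]
        nlinarith [hd, hab, sq_nonneg (Real.sqrt ((q:ℝ)+2) - Real.sqrt ((q:ℝ)+1))]
      have h2 : a ^ (q+1) ≤ Real.exp (-(c * s)) := by
        rw [haq (q+1)]
        apply Real.exp_le_exp.mpr
        have : s ≤ (q:ℝ) + 1 := hs.2
        push_cast
        nlinarith
      have h3 : (1:ℝ) / Real.sqrt ((q:ℝ)+1) ≤ s ^ (-(1/2) : ℝ) := by
        rw [Real.rpow_neg hs0.le, ← Real.sqrt_eq_rpow, one_div]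
        exact inv_anti₀ (Real.sqrt_pos.mpr hs0) (Real.sqrt_le_sqrt hs.2)
      calc a ^ (q + 1) * (Real.sqrt (q + 2) - Real.sqrt (q + 1))
          ≤ a ^ (q+1) * (1 / (2 * Real.sqrt ((q:ℝ) + 1))) := by
            apply mul_le_mul_of_nonneg_left _ (by positivity)
            push_cast
            push_cast at h1
            linarith
        _ ≤ Real.exp (-(c*s)) * (s ^ (-(1/2):ℝ) / 2) := by
            apply mul_le_mul h2 _ (by positivity) (Real.exp_pos _).le
            rw [show (1:ℝ)/(2*Real.sqrt ((q:ℝ)+1)) = (1/Real.sqrt ((q:ℝ)+1))/2 by ring]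
            linarith
        _ = h s / 2 := by rw [hh_def]; ring
    -- integrate the constant over Ioc of length 1
    have hconst : a ^ (q + 1) * (Real.sqrt (q + 2) - Real.sqrt (q + 1))
        = ∫ _ in Set.Ioc (q:ℝ) (q+1), (a ^ (q + 1) * (Real.sqrt (q + 2) - Real.sqrt (q + 1))) := by
      rw [setIntegral_const]
      rw [Real.volume_real_Ioc]
      simp
    rw [hconst]
    have hcint : IntegrableOn
        (fun _ : ℝ => a ^ (q + 1) * (Real.sqrt (q + 2) - Real.sqrt (q + 1)))
        (Set.Ioc (q:ℝ) (q+1)) := by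
      rw [MeasureTheory.integrableOn_const_iff]
      exact Or.inr (by rw [Real.volume_Ioc]; exact ENNReal.ofReal_lt_top)
    exact setIntegral_mono_on hcint hIntq measurableSet_Ioc hptw
  -- telescoping
  set f : ℕ → ℝ := fun q => a ^ q * Real.sqrt q with hf_def
  set S := ∑ q ∈ Finset.range Q, a ^ q * Real.sqrt (q + 1) with hS_def
  obtain ⟨P, rfl⟩ : ∃ P, Q = P + 1 := ⟨Q - 1, (Nat.succ_pred_eq_of_pos hQ).symm⟩
  have hstep : (1 - a) * S ≤ 1 + ∑ q ∈ Finset.range P,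
      a ^ (q + 1) * (Real.sqrt (q + 2) - Real.sqrt (q + 1)) := by
    have haS : a * S = ∑ q ∈ Finset.range (P+1), f (q+1) := by
      rw [hS_def, Finset.mul_sum]
      apply Finset.sum_congr rfl
      intro q hq
      rw [hf_def]
      push_cast
      ring
    have hshift : ∑ q ∈ Finset.range (P+1), f (q+1) = ∑ q ∈ Finset.range (P+1), f q + f (P+1) := by
      have := Finset.sum_range_succ' f (P+1)
      rw [Finset.sum_range_succ f (P+1)] at this
      have hf0 : f 0 = 0 := by simp [hf_def]
      rw [hf0] at this
      linarith [this]
    have hfP : 0 ≤ f (P+1) := by rw [hf_def]; positivity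
    have hdiff : S - ∑ q ∈ Finset.range (P+1), f q
        = ∑ q ∈ Finset.range (P+1), a ^ q * (Real.sqrt (q+1) - Real.sqrt q) := by
      rw [hS_def, ← Finset.sum_sub_distrib]
      apply Finset.sum_congr rfl
      intro q hq
      rw [hf_def]; ring
    have hsplit : ∑ q ∈ Finset.range (P+1), a ^ q * (Real.sqrt (q+1) - Real.sqrt q)
        = 1 + ∑ q ∈ Finset.range P, a ^ (q+1) * (Real.sqrt (q+2) - Real.sqrt (q+1)) := by
      rw [Finset.sum_range_succ' (fun q => a ^ q * (Real.sqrt (q+1) - Real.sqrt q)) P]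
      simp only [Nat.cast_zero, pow_zero, Nat.cast_add, Nat.cast_one]
      rw [add_comm]
      congr 1
      · norm_num
      · apply Finset.sum_congr rfl
        intro q hq
        push_cast
        rw [show ((q:ℝ)+1+1) = (q:ℝ)+2 by ring]
    have hexp : (1 - a) * S = S - a * S := by ring
    linarith [haS, hshift, hdiff, hsplit, hfP, hexp]
  -- sum of integrals ≤ total integral
  have hintsum : ∑ q ∈ Finset.range P, a ^ (q + 1) * (Real.sqrt (q + 2) - Real.sqrt (q + 1))
      ≤ Real.sqrt Real.pi / (2 * Real.sqrt c) := by
    have hIIk : ∀ k : ℕ, IntervalIntegrable (fun s => h s / 2) volume (k:ℝ) ((k:ℝ)+1) := by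
      intro k
      rw [intervalIntegrable_iff_integrableOn_Ioc_of_le (by linarith [Nat.cast_nonneg (α := ℝ) k])]
      exact Integrable.div_const
        (hInt.mono_set (fun s hs => lt_of_le_of_lt (Nat.cast_nonneg k) hs.1)) 2
    calc ∑ q ∈ Finset.range P, a ^ (q + 1) * (Real.sqrt (q + 2) - Real.sqrt (q + 1))
        ≤ ∑ q ∈ Finset.range P, ∫ s in Set.Ioc (q:ℝ) (q+1), h s / 2 :=
          Finset.sum_le_sum (fun q _ => hterm q)
      _ = ∑ q ∈ Finset.range P, ∫ s in (q:ℝ)..((q:ℝ)+1), h s / 2 := by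
          apply Finset.sum_congr rfl
          intro q _
          rw [intervalIntegral.integral_of_le (by linarith [Nat.cast_nonneg (α := ℝ) q])]
      _ = ∫ s in (0:ℝ)..(P:ℝ), h s / 2 := by
          have hadj := intervalIntegral.sum_integral_adjacent_intervals
            (f := fun s => h s / 2) (μ := volume) (a := fun k : ℕ => (k:ℝ)) (n := P)
            (fun k _ => by push_cast; exact hIIk k)
          push_cast at hadj
          rw [← hadj]
      _ = ∫ s in Set.Ioc (0:ℝ) (P:ℝ), h s / 2 := by
          rw [intervalIntegral.integral_of_le (Nat.cast_nonneg P)]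
      _ ≤ ∫ s in Set.Ioi (0:ℝ), h s / 2 := by
          apply setIntegral_mono_set (hInt.div_const 2)
          · filter_upwards [hnn] with s hs
            have h0 : (0:ℝ) ≤ h s := hs
            simp only [Pi.zero_apply]
            linarith
          · exact (Set.Ioc_subset_Ioi_self).eventuallyLE
      _ = Real.sqrt Real.pi / (2 * Real.sqrt c) := by
          rw [integral_div, hval]
          ring
  -- conclude
  rw [div_mul_eq_mul_div, le_div_iff₀ h1a, one_mul]
  calc S * (1 - a) = (1 - a) * S := by ring
    _ ≤ 1 + ∑ q ∈ Finset.range P, a ^ (q + 1) * (Real.sqrt (q + 2) - Real.sqrt (q + 1)) := hstep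
    _ ≤ 1 + Real.sqrt Real.pi / (2 * Real.sqrt c) := by linarith [hintsum]
end

section
/- If ℓ : ℝ^d → ℝ is twice differentiable, L-Lipschitz, γ-smooth, and H-Hessian-Lipschitz (i.e., ‖∇²ℓ(u) − ∇²ℓ(v)‖ ≤ H‖u−v‖), and U(x) = x − θ∇ℓ(x), then x ↦ ℓ(U(x)) is (θLH + (1+θγ)²γ)-smooth, i.e., its gradient is Lipschitz with that constant. -/
open InnerProductSpace

theorem adapted_loss_smooth {d : ℕ} (ℓ : EuclideanSpace ℝ (Fin d) → ℝ)
    (L γ H θ : ℝ) (hθ : 0 < θ)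
    (hC2 : ContDiff ℝ 2 ℓ)
    (hL : ∀ x, ‖gradient ℓ x‖ ≤ L)
    (hgrad : ∀ u v, ‖gradient ℓ u - gradient ℓ v‖ ≤ γ * ‖u - v‖)
    (hHess : ∀ u v, ‖fderiv ℝ (gradient ℓ) u - fderiv ℝ (gradient ℓ) v‖ ≤ H * ‖u - v‖) :
    ∀ u v, ‖gradient (fun x => ℓ (x - θ • gradient ℓ x)) u -
            gradient (fun x => ℓ (x - θ • gradient ℓ x)) v‖ ≤
      (θ * L * H + (1 + θ * γ) ^ 2 * γ) * ‖u - v‖ := by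
  intro u v
  rcases eq_or_ne u v with rfl | huv
  · simp
  have hdist : (0:ℝ) < ‖u - v‖ := by rwa [norm_pos_iff, sub_ne_zero]
  have hγ : 0 ≤ γ :=
    (mul_nonneg_iff_of_pos_right hdist).mp ((norm_nonneg _).trans (hgrad u v))
  have hH : 0 ≤ H :=
    (mul_nonneg_iff_of_pos_right hdist).mp ((norm_nonneg _).trans (hHess u v))
  have hL0 : 0 ≤ L := (norm_nonneg _).trans (hL u)
  -- differentiability facts
  have hfd : ContDiff ℝ 1 (fderiv ℝ ℓ) := hC2.fderiv_right (by norm_num)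
  have hg1 : ContDiff ℝ 1 (gradient ℓ) :=
    ((toDual ℝ (EuclideanSpace ℝ (Fin d))).symm.contDiff).comp hfd
  have hgdiff : Differentiable ℝ (gradient ℓ) := hg1.differentiable one_ne_zero
  set U : EuclideanSpace ℝ (Fin d) → EuclideanSpace ℝ (Fin d) := fun x => x - θ • gradient ℓ x with hUdef
  have hU1 : ContDiff ℝ 1 U := contDiff_id.sub (hg1.const_smul θ)
  have hUdiff : Differentiable ℝ U := hU1.differentiable one_ne_zero
  have hℓdiff : Differentiable ℝ ℓ := hC2.differentiable (by norm_num)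
  -- derivative of U
  have hUd : ∀ x, fderiv ℝ U x
      = ContinuousLinearMap.id ℝ (EuclideanSpace ℝ (Fin d)) - θ • fderiv ℝ (gradient ℓ) x := by
    intro x
    have h2 : DifferentiableAt ℝ (fun x => θ • gradient ℓ x) x :=
      (hgdiff x).const_smul θ
    rw [hUdef]
    rw [fderiv_fun_sub differentiableAt_fun_id h2, fderiv_id',
      fderiv_fun_const_smul (hgdiff x)]
  -- chain rule
  have hchain : ∀ x, fderiv ℝ (fun x => ℓ (x - θ • gradient ℓ x)) x
      = (fderiv ℝ ℓ (U x)).comp (fderiv ℝ U x) := by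
    intro x
    have := fderiv_comp (𝕜 := ℝ) x (hℓdiff (U x)) (hUdiff x)
    simpa [Function.comp_def, hUdef] using this
  -- norm translation between gradient and fderiv
  have hnormgrad : ∀ (f : EuclideanSpace ℝ (Fin d) → ℝ) (a b : EuclideanSpace ℝ (Fin d)),
      ‖gradient f a - gradient f b‖ = ‖fderiv ℝ f a - fderiv ℝ f b‖ := by
    intro f a b
    have : gradient f a - gradient f b
        = (toDual ℝ (EuclideanSpace ℝ (Fin d))).symm (fderiv ℝ f a - fderiv ℝ f b) := by
      rw [map_sub]; rfl
    rw [this, LinearIsometryEquiv.norm_map]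
  -- bounds
  have hB : ∀ y, ‖fderiv ℝ ℓ y‖ ≤ L := by
    intro y
    have : ‖fderiv ℝ ℓ y‖ = ‖gradient ℓ y‖ :=
      ((toDual ℝ (EuclideanSpace ℝ (Fin d))).symm.norm_map (fderiv ℝ ℓ y)).symm
    rw [this]; exact hL y
  have hBdiff : ∀ y z, ‖fderiv ℝ ℓ y - fderiv ℝ ℓ z‖ ≤ γ * ‖y - z‖ := by
    intro y z
    have h1 : gradient ℓ y - gradient ℓ z
        = (toDual ℝ (EuclideanSpace ℝ (Fin d))).symm (fderiv ℝ ℓ y - fderiv ℝ ℓ z) := by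
      rw [map_sub]; rfl
    have h2 := hgrad y z
    rwa [h1, LinearIsometryEquiv.norm_map] at h2
  have hD : ∀ x, ‖fderiv ℝ (gradient ℓ) x‖ ≤ γ := by
    intro x
    have hlip : LipschitzWith ⟨γ, hγ⟩ (gradient ℓ) :=
      LipschitzWith.of_dist_le_mul (fun a b => by
        rw [dist_eq_norm, dist_eq_norm]; exact hgrad a b)
    exact norm_fderiv_le_of_lipschitz ℝ hlip
  have hA : ∀ x, ‖fderiv ℝ U x‖ ≤ 1 + θ * γ := by
    intro x
    rw [hUd x]
    calc ‖ContinuousLinearMap.id ℝ (EuclideanSpace ℝ (Fin d)) - θ • fderiv ℝ (gradient ℓ) x‖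
        ≤ ‖ContinuousLinearMap.id ℝ (EuclideanSpace ℝ (Fin d))‖ + ‖θ • fderiv ℝ (gradient ℓ) x‖ :=
          norm_sub_le _ _
      _ ≤ 1 + θ * γ := by
          have h1 : ‖ContinuousLinearMap.id ℝ (EuclideanSpace ℝ (Fin d))‖ ≤ 1 :=
            ContinuousLinearMap.norm_id_le
          have h2 : ‖θ • fderiv ℝ (gradient ℓ) x‖ ≤ θ * γ := by
            rw [norm_smul, Real.norm_eq_abs, abs_of_pos hθ]
            exact mul_le_mul_of_nonneg_left (hD x) hθ.le
          linarith
  have hAdiff : ‖fderiv ℝ U u - fderiv ℝ U v‖ ≤ θ * H * ‖u - v‖ := by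
    rw [hUd u, hUd v]
    have key : (ContinuousLinearMap.id ℝ (EuclideanSpace ℝ (Fin d)) - θ • fderiv ℝ (gradient ℓ) u)
        - (ContinuousLinearMap.id ℝ (EuclideanSpace ℝ (Fin d)) - θ • fderiv ℝ (gradient ℓ) v)
        = θ • (fderiv ℝ (gradient ℓ) v - fderiv ℝ (gradient ℓ) u) := by
      rw [smul_sub]; abel
    rw [key, norm_smul, Real.norm_eq_abs, abs_of_pos hθ]
    calc θ * ‖fderiv ℝ (gradient ℓ) v - fderiv ℝ (gradient ℓ) u‖
        ≤ θ * (H * ‖v - u‖) := mul_le_mul_of_nonneg_left (hHess v u) hθ.le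
      _ = θ * H * ‖u - v‖ := by rw [norm_sub_rev]; ring
  have hUlip : ‖U u - U v‖ ≤ (1 + θ * γ) * ‖u - v‖ := by
    have key : U u - U v = (u - v) - θ • (gradient ℓ u - gradient ℓ v) := by
      rw [hUdef, smul_sub]; beta_reduce; abel
    rw [key]
    calc ‖(u - v) - θ • (gradient ℓ u - gradient ℓ v)‖
        ≤ ‖u - v‖ + ‖θ • (gradient ℓ u - gradient ℓ v)‖ := norm_sub_le _ _
      _ ≤ ‖u - v‖ + θ * (γ * ‖u - v‖) := by
          have : ‖θ • (gradient ℓ u - gradient ℓ v)‖ ≤ θ * (γ * ‖u - v‖) := by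
            rw [norm_smul, Real.norm_eq_abs, abs_of_pos hθ]
            exact mul_le_mul_of_nonneg_left (hgrad u v) hθ.le
          linarith
      _ = (1 + θ * γ) * ‖u - v‖ := by ring
  -- assemble
  rw [hnormgrad, hchain u, hchain v]
  set Au := fderiv ℝ U u
  set Av := fderiv ℝ U v
  set Bu := fderiv ℝ ℓ (U u)
  set Bv := fderiv ℝ ℓ (U v)
  have split : Bu.comp Au - Bv.comp Av
      = (Bu - Bv).comp Au + Bv.comp (Au - Av) := by
    rw [ContinuousLinearMap.sub_comp, ContinuousLinearMap.comp_sub]; abel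
  rw [split]
  have h1 : ‖(Bu - Bv).comp Au‖ ≤ (γ * ((1 + θ * γ) * ‖u - v‖)) * (1 + θ * γ) := by
    calc ‖(Bu - Bv).comp Au‖ ≤ ‖Bu - Bv‖ * ‖Au‖ := ContinuousLinearMap.opNorm_comp_le _ _
      _ ≤ (γ * ((1 + θ * γ) * ‖u - v‖)) * (1 + θ * γ) := by
          apply mul_le_mul
          · calc ‖Bu - Bv‖ ≤ γ * ‖U u - U v‖ := hBdiff _ _
              _ ≤ γ * ((1 + θ * γ) * ‖u - v‖) :=
                  mul_le_mul_of_nonneg_left hUlip hγ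
          · exact hA u
          · exact norm_nonneg _
          · positivity
  have h2 : ‖Bv.comp (Au - Av)‖ ≤ L * (θ * H * ‖u - v‖) := by
    calc ‖Bv.comp (Au - Av)‖ ≤ ‖Bv‖ * ‖Au - Av‖ := ContinuousLinearMap.opNorm_comp_le _ _
      _ ≤ L * (θ * H * ‖u - v‖) :=
          mul_le_mul (hB _) hAdiff (norm_nonneg _) hL0
  calc ‖(Bu - Bv).comp Au + Bv.comp (Au - Av)‖
      ≤ ‖(Bu - Bv).comp Au‖ + ‖Bv.comp (Au - Av)‖ := norm_add_le _ _
    _ ≤ (γ * ((1 + θ * γ) * ‖u - v‖)) * (1 + θ * γ) + L * (θ * H * ‖u - v‖) := by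
        linarith
    _ = (θ * L * H + (1 + θ * γ) ^ 2 * γ) * ‖u - v‖ := by ring
end

section
/- Let u : ℕ → ℝ₊ be nonnegative with u_1 = 0 and define v_{t+1} = v_t + u_t for t ≥ 1 with v_1 = 0. Then for any ε > 0 and T ≥ 1, ∑_{t=1}^T u_t / (ε + v_{t+1}) ≤ ln(1 + (∑_{t=1}^T u_t)/ε). -/
/-- key pointwise inequality: for a > 0, x ≥ 0, x/(a+x) ≤ log(a+x) - log a -/
lemma key_ineq (a x : ℝ) (ha : 0 < a) (hx : 0 ≤ x) :
    x / (a + x) ≤ Real.log (a + x) - Real.log a := by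
  have hax : 0 < a + x := by linarith
  have h := Real.log_le_sub_one_of_pos (x := a / (a + x)) (by positivity)
  rw [Real.log_div (ne_of_gt ha) (ne_of_gt hax)] at h
  have : a / (a + x) = 1 - x / (a + x) := by field_simp; ring
  rw [this] at h
  linarith

theorem adagrad_sum_ratio (u v : ℕ → ℝ) (hu : ∀ t, 0 ≤ u t) (hu1 : u 1 = 0)
    (hv1 : v 1 = 0) (hv : ∀ t, 1 ≤ t → v (t + 1) = v t + u t)
    (ε : ℝ) (hε : 0 < ε) (T : ℕ) (hT : 1 ≤ T) :
    ∑ t ∈ Finset.Icc 1 T, u t / (ε + v (t + 1)) ≤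
      Real.log (1 + (∑ t ∈ Finset.Icc 1 T, u t) / ε) := by
  -- v (T+1) equals the partial sum
  have hvsum : ∀ n, 1 ≤ n → v (n + 1) = ∑ t ∈ Finset.Icc 1 n, u t := by
    intro n hn
    induction n with
    | zero => omega
    | succ m ih =>
      rcases Nat.lt_or_ge m 1 with hm | hm
      · interval_cases m
        simp [hv 1 le_rfl, hv1, hu1]
      · rw [hv (m + 1) (by omega), ih hm, Finset.sum_Icc_succ_top (by omega)]
  have hvpos : ∀ n, 1 ≤ n → 0 ≤ v (n + 1) := by
    intro n hn
    rw [hvsum n hn]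
    exact Finset.sum_nonneg fun t _ => hu t
  -- main induction
  have main : ∀ n, 1 ≤ n →
      ∑ t ∈ Finset.Icc 1 n, u t / (ε + v (t + 1)) ≤
        Real.log (ε + v (n + 1)) - Real.log ε := by
    intro n hn
    induction n with
    | zero => omega
    | succ m ih =>
      rcases Nat.lt_or_ge m 1 with hm | hm
      · interval_cases m
        simp [hv 1 le_rfl, hv1, hu1]
      · rw [Finset.sum_Icc_succ_top (by omega)]
        have h1 : v (m + 1 + 1) = v (m + 1) + u (m + 1) := hv (m + 1) (by omega)
        have h2 : 0 < ε + v (m + 1) := by have := hvpos m hm; linarith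
        have h3 : u (m + 1) / (ε + v (m + 1 + 1)) ≤
            Real.log (ε + v (m + 1 + 1)) - Real.log (ε + v (m + 1)) := by
          rw [h1, ← add_assoc]
          exact key_ineq _ _ h2 (hu (m + 1))
        linarith [ih hm]
  have hfin := main T hT
  have hS : 0 ≤ ∑ t ∈ Finset.Icc 1 T, u t := Finset.sum_nonneg fun t _ => hu t
  have : Real.log (ε + v (T + 1)) - Real.log ε =
      Real.log (1 + (∑ t ∈ Finset.Icc 1 T, u t) / ε) := by
    rw [hvsum T hT, ← Real.log_div (by positivity) (ne_of_gt hε)]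
    congr 1
    field_simp
  linarith
end
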